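/- (Summability of the weighted proximal-error sequence) Consider the distributed proximal-gradient iterates x_i^(k), y_i^(k), q_i^(k), q̂_i^(k) for agents i = 1,…,m as defined in the context, with q̄^(k) = (1/m)Σ_{i=1}^m q̂_i^(k). Let {ε^(k)}_{k≥1} be any sequence of nonnegative reals satisfying, for every k ≥ 1, ε^(k) ≤ (2·G_h/m)·Σ_{i=1}^m ‖q̂_i^(k) − q̄^(k)‖ + (1/(2α))·( (1/m)·Σ_{i=1}^m ‖q̂_i^(k) − q̄^(k)‖ )². Then the series Σ_{k=1}^∞ k·√(ε^(k)) converges (i.e., the sequence k ↦ k·√(ε^(k)) is summable). -/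

import Mathlib

open RealInnerProductSpace

section aux
variable {E : Type*} [NormedAddCommGroup E] [InnerProductSpace ℝ E]

lemma prox_subopt {α : ℝ} (hα : 0 < α) {h : E → ℝ} (hh : ConvexOn ℝ Set.univ h)
    {x a : E}
    (hmin : ∀ z, h x + (1 / (2 * α)) * ‖x - a‖ ^ 2 ≤ h z + (1 / (2 * α)) * ‖z - a‖ ^ 2)
    (z : E) {t : ℝ} (ht0 : 0 < t) (ht1 : t ≤ 1) :
    2 * α * h x ≤ 2 * α * h z + (2 * ⟪x - a, z - x⟫ + t * ‖z - x‖ ^ 2) := by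
  have hw := hmin (x + t • (z - x))
  have hconv := hh.2 (Set.mem_univ x) (Set.mem_univ z)
    (by linarith : (0:ℝ) ≤ 1 - t) ht0.le (by ring)
  rw [show (1 - t) • x + t • z = x + t • (z - x) by module] at hconv
  simp only [smul_eq_mul] at hconv
  have hexp : ‖x + t • (z - x) - a‖ ^ 2
      = ‖x - a‖ ^ 2 + 2 * t * ⟪x - a, z - x⟫ + t ^ 2 * ‖z - x‖ ^ 2 := by
    rw [show x + t • (z - x) - a = (x - a) + t • (z - x) by abel]
    rw [norm_add_sq_real, real_inner_smul_right, norm_smul, Real.norm_eq_abs, abs_of_pos ht0]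
    ring
  rw [hexp] at hw
  have step1 : h x ≤ h z + (1 / (2 * α)) * (2 * ⟪x - a, z - x⟫ + t * ‖z - x‖ ^ 2) := by
    have h3 : t * h x ≤ t * (h z + (1 / (2 * α)) * (2 * ⟪x - a, z - x⟫ + t * ‖z - x‖ ^ 2)) := by
      nlinarith [hw, hconv]
    exact le_of_mul_le_mul_left h3 ht0
  have h4 := mul_le_mul_of_nonneg_left step1 (by positivity : (0:ℝ) ≤ 2 * α)
  have h5 : 2 * α * (h z + (1 / (2 * α)) * (2 * ⟪x - a, z - x⟫ + t * ‖z - x‖ ^ 2))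
      = 2 * α * h z + (2 * ⟪x - a, z - x⟫ + t * ‖z - x‖ ^ 2) := by
    field_simp
  rw [h5] at h4
  exact h4

lemma prox_nonexpansive {α : ℝ} (hα : 0 < α) {h : E → ℝ} (hh : ConvexOn ℝ Set.univ h)
    {x₁ x₂ a₁ a₂ : E}
    (h1 : ∀ z, h x₁ + (1 / (2 * α)) * ‖x₁ - a₁‖ ^ 2 ≤ h z + (1 / (2 * α)) * ‖z - a₁‖ ^ 2)
    (h2 : ∀ z, h x₂ + (1 / (2 * α)) * ‖x₂ - a₂‖ ^ 2 ≤ h z + (1 / (2 * α)) * ‖z - a₂‖ ^ 2) :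
    ‖x₁ - x₂‖ ≤ ‖a₁ - a₂‖ := by
  have main : ∀ t : ℝ, 0 < t → t ≤ 1 →
      ‖x₁ - x₂‖ ^ 2 ≤ ⟪a₁ - a₂, x₁ - x₂⟫ + t * ‖x₁ - x₂‖ ^ 2 := by
    intro t ht0 ht1
    have e1 := prox_subopt hα hh h1 x₂ ht0 ht1
    have e2 := prox_subopt hα hh h2 x₁ ht0 ht1
    have i1 : ⟪x₁ - a₁, x₂ - x₁⟫ = -⟪x₁ - a₁, x₁ - x₂⟫ := by
      rw [← inner_neg_right]; congr 1; abel
    have n1 : ‖x₂ - x₁‖ = ‖x₁ - x₂‖ := norm_sub_rev _ _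
    rw [i1, n1] at e1
    have i3 : ⟪x₂ - a₂, x₁ - x₂⟫ - ⟪x₁ - a₁, x₁ - x₂⟫
        = ⟪a₁ - a₂, x₁ - x₂⟫ - ‖x₁ - x₂‖ ^ 2 := by
      rw [← inner_sub_left, show x₂ - a₂ - (x₁ - a₁) = (a₁ - a₂) - (x₁ - x₂) by abel,
        inner_sub_left, real_inner_self_eq_norm_sq]
    linarith [e1, e2]
  by_cases hd : ‖x₁ - x₂‖ = 0
  · rw [hd]; exact norm_nonneg _
  · have hdpos : 0 < ‖x₁ - x₂‖ := lt_of_le_of_ne (norm_nonneg _) (Ne.symm hd)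
    have key : ‖x₁ - x₂‖ ^ 2 ≤ ⟪a₁ - a₂, x₁ - x₂⟫ := by
      by_contra hcon
      push_neg at hcon
      set δ := ‖x₁ - x₂‖ ^ 2 - ⟪a₁ - a₂, x₁ - x₂⟫ with hδ
      have hδpos : 0 < δ := by simp [hδ]; linarith
      have ht : 0 < min 1 (δ / (2 * ‖x₁ - x₂‖ ^ 2)) := by positivity
      have := main _ ht (min_le_left _ _)
      have hle : min 1 (δ / (2 * ‖x₁ - x₂‖ ^ 2)) * ‖x₁ - x₂‖ ^ 2 ≤ δ / 2 := by
        have h6 : min 1 (δ / (2 * ‖x₁ - x₂‖ ^ 2)) ≤ δ / (2 * ‖x₁ - x₂‖ ^ 2) := min_le_right _ _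
        have h7 := mul_le_mul_of_nonneg_right h6 (sq_nonneg ‖x₁ - x₂‖)
        calc min 1 (δ / (2 * ‖x₁ - x₂‖ ^ 2)) * ‖x₁ - x₂‖ ^ 2
            ≤ δ / (2 * ‖x₁ - x₂‖ ^ 2) * ‖x₁ - x₂‖ ^ 2 := h7
          _ = δ / 2 := by field_simp
      linarith
    have hfin := key.trans (real_inner_le_norm (a₁ - a₂) (x₁ - x₂))
    have : ‖x₁ - x₂‖ * ‖x₁ - x₂‖ ≤ ‖a₁ - a₂‖ * ‖x₁ - x₂‖ := by nlinarith
    exact le_of_mul_le_mul_right this hdpos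

end aux

lemma sum_smul_sub_center {m : ℕ} {E : Type*} [AddCommGroup E] [Module ℝ E]
    (w : Fin m → ℝ) (v : Fin m → E) (c : E) (hw : ∑ l, w l = 0) :
    ∑ l, w l • v l = ∑ l, w l • (v l - c) := by
  simp_rw [smul_sub]
  rw [Finset.sum_sub_distrib, ← Finset.sum_smul, hw, zero_smul, sub_zero]

lemma norm_sum_smul_le {m : ℕ} {E : Type*} [NormedAddCommGroup E] [NormedSpace ℝ E]
    (w : Fin m → ℝ) (u : Fin m → E) (b : ℝ) (hb : ∀ l, |w l| ≤ b) :
    ‖∑ l, w l • u l‖ ≤ b * ∑ l, ‖u l‖ := by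
  calc ‖∑ l, w l • u l‖ ≤ ∑ l, ‖w l • u l‖ := norm_sum_le _ _
    _ ≤ ∑ l, b * ‖u l‖ := Finset.sum_le_sum (fun l _ => by
        rw [norm_smul, Real.norm_eq_abs]
        exact mul_le_mul_of_nonneg_right (hb l) (norm_nonneg _))
    _ = b * ∑ l, ‖u l‖ := (Finset.mul_sum _ _ _).symm

set_option maxHeartbeats 1000000 in
/-- Summability of the weighted proximal-error sequence. -/
theorem weighted_prox_error_summable {d m : ℕ} (hm : 1 ≤ m)
    (α L Gg Gh Γ γ : ℝ)
    (hα : 0 < α) (hL : 0 < L) (hGg : 0 < Gg) (hGh : 0 < Gh) (hΓ : 0 < Γ)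
    (hγ0 : 0 < γ) (hγ1 : γ < 1)
    -- the differentiable local objectives and their gradients
    (g : Fin m → EuclideanSpace ℝ (Fin d) → ℝ)
    (g' : Fin m → EuclideanSpace ℝ (Fin d) → EuclideanSpace ℝ (Fin d))
    (hgconv : ∀ i, ConvexOn ℝ Set.univ (g i))
    (hgrad : ∀ i z, HasGradientAt (g i) (g' i z) z)
    (hLip : ∀ i z w, ‖g' i z - g' i w‖ ≤ L * ‖z - w‖)
    (hGgrad : ∀ i z, ‖g' i z‖ ≤ Gg)
    -- the common nondifferentiable objective, with bounded subgradients
    (h : EuclideanSpace ℝ (Fin d) → ℝ)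
    (hhconv : ConvexOn ℝ Set.univ h)
    (hsub : ∀ x z : EuclideanSpace ℝ (Fin d),
      (∀ u, h x + ⟪z, u - x⟫ ≤ h u) → ‖z‖ ≤ Gh)
    -- the consensus weight matrices
    (lam : ℕ → Fin m → Fin m → ℝ)
    (hlam_nonneg : ∀ k, 1 ≤ k → ∀ i j, 0 ≤ lam k i j)
    (hlam_row : ∀ k, 1 ≤ k → ∀ i, ∑ j, lam k i j = 1)
    (hlam_col : ∀ k, 1 ≤ k → ∀ j, ∑ i, lam k i j = 1)
    (hlam_close : ∀ k, 1 ≤ k → ∀ i j, |lam k i j - 1 / m| ≤ Γ * γ ^ k)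
    -- the iterates
    (x y q qhat : ℕ → Fin m → EuclideanSpace ℝ (Fin d))
    (hq : ∀ k, 1 ≤ k → ∀ i, q k i = y (k - 1) i - α • g' i (y (k - 1) i))
    (hqhat : ∀ k, 1 ≤ k → ∀ i, qhat k i = ∑ j, lam k i j • q k j)
    (hx : ∀ k, 1 ≤ k → ∀ i, ∀ z : EuclideanSpace ℝ (Fin d),
      h (x k i) + (1 / (2 * α)) * ‖x k i - qhat k i‖ ^ 2 ≤
        h z + (1 / (2 * α)) * ‖z - qhat k i‖ ^ 2)
    (hy : ∀ k, 1 ≤ k → ∀ i,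
      y k i = x k i + (((k : ℝ) - 1) / ((k : ℝ) + 2)) • (x k i - x (k - 1) i))
    -- the proximal error of the inexact centralized formulation
    (ε : ℕ → ℝ) (hε_nonneg : ∀ k, 1 ≤ k → 0 ≤ ε k)
    (hε : ∀ k, 1 ≤ k →
      ε k ≤ (2 * Gh / m) * ∑ i, ‖qhat k i - (1 / (m : ℝ)) • ∑ j, qhat k j‖
        + (1 / (2 * α)) *
          ((1 / (m : ℝ)) * ∑ i, ‖qhat k i - (1 / (m : ℝ)) • ∑ j, qhat k j‖) ^ 2) :
    Summable (fun k : ℕ => (k : ℝ) * Real.sqrt (ε k)) := by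
  have hm0 : (0:ℝ) < m := by exact_mod_cast hm
  set i0 : Fin m := ⟨0, hm⟩ with hi0
  set Q : ℕ → ℝ := fun k => ∑ l, ‖q k l - q k i0‖ with hQdef
  have hQnonneg : ∀ k, 0 ≤ Q k := fun k => Finset.sum_nonneg (fun l _ => norm_nonneg _)
  -- pairwise qhat deviation
  have hqhat_pair : ∀ k, 1 ≤ k → ∀ i j : Fin m,
      ‖qhat k i - qhat k j‖ ≤ 2 * Γ * γ ^ k * Q k := by
    intro k hk i j
    have hzero : ∑ l, (lam k i l - lam k j l) = 0 := by
      rw [Finset.sum_sub_distrib, hlam_row k hk i, hlam_row k hk j]; ring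
    have hdiff : qhat k i - qhat k j = ∑ l, (lam k i l - lam k j l) • (q k l - q k i0) := by
      rw [← sum_smul_sub_center _ _ _ hzero, hqhat k hk i, hqhat k hk j,
        ← Finset.sum_sub_distrib]
      simp_rw [sub_smul]
    rw [hdiff]
    apply norm_sum_smul_le
    intro l
    have h1 := hlam_close k hk i l
    have h2 := hlam_close k hk j l
    calc |lam k i l - lam k j l|
        = |(lam k i l - 1 / m) + (-(lam k j l - 1 / m))| := by ring_nf
      _ ≤ |lam k i l - 1 / m| + |(-(lam k j l - 1 / m))| := abs_add_le _ _
      _ ≤ Γ * γ ^ k + Γ * γ ^ k := by rw [abs_neg]; exact add_le_add h1 h2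
      _ = 2 * Γ * γ ^ k := by ring
  -- deviation from the average
  have hqbar : ∀ k, 1 ≤ k → ∀ i : Fin m,
      ‖qhat k i - (1 / (m : ℝ)) • ∑ j, qhat k j‖ ≤ Γ * γ ^ k * Q k := by
    intro k hk i
    have hsum : (1 / (m : ℝ)) • ∑ j, qhat k j = ∑ l, (1 / (m : ℝ)) • q k l := by
      have h1 : ∑ j, qhat k j = ∑ l, q k l := by
        simp_rw [hqhat k hk]
        rw [Finset.sum_comm]
        simp_rw [← Finset.sum_smul, hlam_col k hk, one_smul]
      rw [h1, Finset.smul_sum]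
    have hzero : ∑ l, (lam k i l - 1 / (m:ℝ)) = 0 := by
      rw [Finset.sum_sub_distrib, hlam_row k hk i, Finset.sum_const, Finset.card_univ,
        Fintype.card_fin, nsmul_eq_mul]
      field_simp
      norm_num
    have hdiff : qhat k i - (1 / (m : ℝ)) • ∑ j, qhat k j
        = ∑ l, (lam k i l - 1 / (m:ℝ)) • (q k l - q k i0) := by
      rw [← sum_smul_sub_center _ _ _ hzero, hsum, hqhat k hk i, ← Finset.sum_sub_distrib]
      simp_rw [sub_smul]
    rw [hdiff]
    exact norm_sum_smul_le _ _ _ (fun l => hlam_close k hk i l)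
  -- x-deviation sum
  have hXdsum : ∀ k, 1 ≤ k → ∑ j, ‖x k j - x k i0‖ ≤ 2 * m * Γ * γ ^ k * Q k := by
    intro k hk
    calc ∑ j, ‖x k j - x k i0‖
        ≤ ∑ j : Fin m, (2 * Γ * γ ^ k * Q k) := by
          apply Finset.sum_le_sum
          intro j _
          exact (prox_nonexpansive hα hhconv (hx k hk j) (hx k hk i0)).trans
            (hqhat_pair k hk j i0)
      _ = 2 * m * Γ * γ ^ k * Q k := by
          rw [Finset.sum_const, Finset.card_univ, Fintype.card_fin, nsmul_eq_mul]; ring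
  -- y-deviation sum
  have hYdsum : ∀ k, 1 ≤ k →
      ∑ j, ‖y k j - y k i0‖ ≤ 2 * ∑ j, ‖x k j - x k i0‖ + ∑ j, ‖x (k-1) j - x (k-1) i0‖ := by
    intro k hk
    have hθ0 : 0 ≤ ((k : ℝ) - 1) / ((k : ℝ) + 2) := by
      apply div_nonneg
      · have : (1:ℝ) ≤ (k:ℝ) := by exact_mod_cast hk
        linarith
      · positivity
    have hθ1 : ((k : ℝ) - 1) / ((k : ℝ) + 2) ≤ 1 := by
      rw [div_le_one (by positivity)]; linarith
    have hperj : ∀ j : Fin m, ‖y k j - y k i0‖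
        ≤ 2 * ‖x k j - x k i0‖ + ‖x (k-1) j - x (k-1) i0‖ := by
      intro j
      rw [hy k hk j, hy k hk i0]
      set θ := ((k : ℝ) - 1) / ((k : ℝ) + 2)
      have heq : x k j + θ • (x k j - x (k-1) j) - (x k i0 + θ • (x k i0 - x (k-1) i0))
          = (x k j - x k i0) + θ • ((x k j - x k i0) - (x (k-1) j - x (k-1) i0)) := by
        module
      rw [heq]
      calc ‖(x k j - x k i0) + θ • ((x k j - x k i0) - (x (k-1) j - x (k-1) i0))‖
          ≤ ‖x k j - x k i0‖ + ‖θ • ((x k j - x k i0) - (x (k-1) j - x (k-1) i0))‖ :=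
            norm_add_le _ _
        _ = ‖x k j - x k i0‖ + θ * ‖(x k j - x k i0) - (x (k-1) j - x (k-1) i0)‖ := by
            rw [norm_smul, Real.norm_eq_abs, abs_of_nonneg hθ0]
        _ ≤ ‖x k j - x k i0‖ + 1 * (‖x k j - x k i0‖ + ‖x (k-1) j - x (k-1) i0‖) := by
            have := norm_sub_le (x k j - x k i0) (x (k-1) j - x (k-1) i0)
            have hmul := mul_le_mul hθ1 this (norm_nonneg _)
              (by norm_num : (0:ℝ) ≤ 1)
            linarith
        _ = 2 * ‖x k j - x k i0‖ + ‖x (k-1) j - x (k-1) i0‖ := by ring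
    calc ∑ j, ‖y k j - y k i0‖
        ≤ ∑ j, (2 * ‖x k j - x k i0‖ + ‖x (k-1) j - x (k-1) i0‖) :=
          Finset.sum_le_sum (fun j _ => hperj j)
      _ = 2 * ∑ j, ‖x k j - x k i0‖ + ∑ j, ‖x (k-1) j - x (k-1) i0‖ := by
          rw [Finset.sum_add_distrib, ← Finset.mul_sum]
  -- Q bound via y
  have hQle : ∀ k, 1 ≤ k → Q k ≤ (∑ j, ‖y (k-1) j - y (k-1) i0‖) + 2 * m * α * Gg := by
    intro k hk
    have hperl : ∀ l : Fin m, ‖q k l - q k i0‖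
        ≤ ‖y (k-1) l - y (k-1) i0‖ + 2 * α * Gg := by
      intro l
      rw [hq k hk l, hq k hk i0]
      have heq : y (k-1) l - α • g' l (y (k-1) l) - (y (k-1) i0 - α • g' i0 (y (k-1) i0))
          = (y (k-1) l - y (k-1) i0) + (α • g' i0 (y (k-1) i0) - α • g' l (y (k-1) l)) := by
        module
      rw [heq]
      calc ‖(y (k-1) l - y (k-1) i0) + (α • g' i0 (y (k-1) i0) - α • g' l (y (k-1) l))‖
          ≤ ‖y (k-1) l - y (k-1) i0‖ + ‖α • g' i0 (y (k-1) i0) - α • g' l (y (k-1) l)‖ :=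
            norm_add_le _ _
        _ ≤ ‖y (k-1) l - y (k-1) i0‖ + (‖α • g' i0 (y (k-1) i0)‖ + ‖α • g' l (y (k-1) l)‖) := by
            linarith [norm_sub_le (α • g' i0 (y (k-1) i0)) (α • g' l (y (k-1) l))]
        _ ≤ ‖y (k-1) l - y (k-1) i0‖ + 2 * α * Gg := by
            rw [norm_smul, norm_smul, Real.norm_eq_abs, abs_of_pos hα]
            have h1 := hGgrad i0 (y (k-1) i0)
            have h2 := hGgrad l (y (k-1) l)
            nlinarith
    calc Q k ≤ ∑ l, (‖y (k-1) l - y (k-1) i0‖ + 2 * α * Gg) :=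
        Finset.sum_le_sum (fun l _ => hperl l)
      _ = (∑ j, ‖y (k-1) j - y (k-1) i0‖) + 2 * m * α * Gg := by
          rw [Finset.sum_add_distrib, Finset.sum_const, Finset.card_univ,
            Fintype.card_fin, nsmul_eq_mul]; ring
  -- the recursion for k ≥ 3
  have hrec : ∀ k, 3 ≤ k →
      Q k ≤ 4 * m * Γ * γ ^ (k-1) * Q (k-1) + 2 * m * Γ * γ ^ (k-2) * Q (k-2)
        + 2 * m * α * Gg := by
    intro k hk3
    have hk1 : 1 ≤ k := by omega
    have hk1' : 1 ≤ k - 1 := by omega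
    have hk2' : 1 ≤ k - 2 := by omega
    have e12 : k - 1 - 1 = k - 2 := by omega
    have h1 := hQle k hk1
    have h2 := hYdsum (k-1) hk1'
    rw [e12] at h2
    have h3 := hXdsum (k-1) hk1'
    have h4 := hXdsum (k-2) hk2'
    linarith
  -- uniform bound on Q
  obtain ⟨N, hN⟩ := exists_pow_lt_of_lt_one
    (show (0:ℝ) < 1 / (16 * m * Γ + 1) by positivity) hγ1
  set K := N + 3 with hK
  set M : ℝ := 4 * m * α * Gg + ∑ k ∈ Finset.range K, Q k with hM
  have hMge : 4 * m * α * Gg ≤ M := by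
    have : 0 ≤ ∑ k ∈ Finset.range K, Q k :=
      Finset.sum_nonneg (fun k _ => hQnonneg k)
    simp [hM]; linarith
  have hM0 : 0 ≤ M := le_trans (by positivity) hMge
  have hcoef : ∀ e, N ≤ e → 4 * m * Γ * γ ^ e ≤ 1 / 4 := by
    intro e he
    have hpow : γ ^ e ≤ γ ^ N := pow_le_pow_of_le_one hγ0.le hγ1.le he
    have h5 : 4 * (m:ℝ) * Γ * γ ^ e ≤ 4 * m * Γ * (1 / (16 * m * Γ + 1)) := by
      have := hpow.trans hN.le
      apply mul_le_mul_of_nonneg_left this (by positivity)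
    have h6 : 4 * (m:ℝ) * Γ * (1 / (16 * m * Γ + 1)) ≤ 1 / 4 := by
      rw [mul_one_div, div_le_div_iff₀ (by positivity) (by norm_num)]
      nlinarith
    linarith
  have hQM : ∀ k, Q k ≤ M := by
    intro k
    induction k using Nat.strong_induction_on with
    | _ k ih =>
      by_cases hkK : k < K
      · have h7 : Q k ≤ ∑ j ∈ Finset.range K, Q j :=
          Finset.single_le_sum (f := Q) (fun j _ => hQnonneg j) (Finset.mem_range.mpr hkK)
        have : (0:ℝ) ≤ 4 * m * α * Gg := by positivity
        simp only [hM]; linarith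
      · push_neg at hkK
        have hk3 : 3 ≤ k := by omega
        have hr := hrec k hk3
        have h1 : Q (k-1) ≤ M := ih _ (by omega)
        have h2 : Q (k-2) ≤ M := ih _ (by omega)
        have hc1 : 4 * m * Γ * γ ^ (k-1) ≤ 1 / 4 := hcoef _ (by omega)
        have hc2 : 2 * m * Γ * γ ^ (k-2) ≤ 1 / 4 := by
          have := hcoef (k-2) (by omega)
          have hnn : (0:ℝ) ≤ 2 * m * Γ * γ ^ (k-2) := by positivity
          nlinarith
        have hb1 : 4 * m * Γ * γ ^ (k-1) * Q (k-1) ≤ (1/4) * M :=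
          mul_le_mul hc1 h1 (hQnonneg _) (by norm_num)
        have hb2 : 2 * m * Γ * γ ^ (k-2) * Q (k-2) ≤ (1/4) * M :=
          mul_le_mul hc2 h2 (hQnonneg _) (by norm_num)
        linarith
  -- bound on ε
  set C : ℝ := 2 * Gh * Γ * M + (1 / (2 * α)) * (Γ * M) ^ 2 with hC
  have hC0 : 0 ≤ C := by
    apply add_nonneg
    · have : (0:ℝ) ≤ 2 * Gh * Γ := by positivity
      exact mul_nonneg this hM0
    · exact mul_nonneg (by positivity) (sq_nonneg _)
  have hεC : ∀ k, 1 ≤ k → ε k ≤ C * γ ^ k := by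
    intro k hk
    set T : ℝ := ∑ i, ‖qhat k i - (1 / (m : ℝ)) • ∑ j, qhat k j‖ with hT
    have hT0 : 0 ≤ T := Finset.sum_nonneg (fun i _ => norm_nonneg _)
    have hTle : T ≤ m * (Γ * γ ^ k * M) := by
      calc T ≤ ∑ i : Fin m, (Γ * γ ^ k * Q k) :=
          Finset.sum_le_sum (fun i _ => hqbar k hk i)
        _ = m * (Γ * γ ^ k * Q k) := by
            rw [Finset.sum_const, Finset.card_univ, Fintype.card_fin, nsmul_eq_mul]
        _ ≤ m * (Γ * γ ^ k * M) := by
            apply mul_le_mul_of_nonneg_left ?_ hm0.le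
            exact mul_le_mul_of_nonneg_left (hQM k) (by positivity)
      -- end
    have h8 := hε k hk
    have h9 : (2 * Gh / m) * T ≤ 2 * Gh * Γ * γ ^ k * M := by
      have := mul_le_mul_of_nonneg_left hTle (by positivity : (0:ℝ) ≤ 2 * Gh / m)
      calc (2 * Gh / m) * T ≤ (2 * Gh / m) * (m * (Γ * γ ^ k * M)) := this
        _ = 2 * Gh * Γ * γ ^ k * M := by field_simp
    have h10 : ((1 / (m:ℝ)) * T) ^ 2 ≤ (Γ * M) ^ 2 * γ ^ k := by
      have ha : (0:ℝ) ≤ (1 / (m:ℝ)) * T := by positivity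
      have hb : (1 / (m:ℝ)) * T ≤ Γ * γ ^ k * M := by
        have := mul_le_mul_of_nonneg_left hTle (by positivity : (0:ℝ) ≤ 1 / (m:ℝ))
        calc (1 / (m:ℝ)) * T ≤ (1 / (m:ℝ)) * (m * (Γ * γ ^ k * M)) := this
          _ = Γ * γ ^ k * M := by field_simp
      have hsq : ((1 / (m:ℝ)) * T) ^ 2 ≤ (Γ * γ ^ k * M) ^ 2 := by
        apply pow_le_pow_left₀ ha hb
      have hγk1 : γ ^ k ≤ 1 := pow_le_one₀ hγ0.le hγ1.le
      have hγk0 : 0 ≤ γ ^ k := by positivity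
      calc ((1 / (m:ℝ)) * T) ^ 2 ≤ (Γ * γ ^ k * M) ^ 2 := hsq
        _ = (Γ * M) ^ 2 * (γ ^ k * γ ^ k) := by ring
        _ ≤ (Γ * M) ^ 2 * (γ ^ k * 1) := by
            apply mul_le_mul_of_nonneg_left ?_ (sq_nonneg _)
            exact mul_le_mul_of_nonneg_left hγk1 hγk0
        _ = (Γ * M) ^ 2 * γ ^ k := by ring
    have h11 : (1 / (2*α)) * ((1 / (m:ℝ)) * T) ^ 2 ≤ (1 / (2*α)) * ((Γ * M) ^ 2 * γ ^ k) :=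
      mul_le_mul_of_nonneg_left h10 (by positivity)
    calc ε k ≤ (2 * Gh / m) * T + (1 / (2*α)) * ((1 / (m:ℝ)) * T) ^ 2 := h8
      _ ≤ 2 * Gh * Γ * γ ^ k * M + (1 / (2*α)) * ((Γ * M) ^ 2 * γ ^ k) := by linarith
      _ = C * γ ^ k := by rw [hC]; ring
  -- conclude summability
  have hr0 : 0 ≤ Real.sqrt γ := Real.sqrt_nonneg γ
  have hr1 : Real.sqrt γ < 1 := by
    nlinarith [Real.sq_sqrt hγ0.le, Real.sqrt_nonneg γ]
  have hsummable : Summable (fun n : ℕ => (n:ℝ) * (Real.sqrt γ) ^ n) := by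
    have := summable_pow_mul_geometric_of_norm_lt_one 1
      (show ‖Real.sqrt γ‖ < 1 by rw [Real.norm_eq_abs, abs_of_nonneg hr0]; exact hr1)
    simpa using this
  apply Summable.of_nonneg_of_le
    (fun n => mul_nonneg (Nat.cast_nonneg n) (Real.sqrt_nonneg _))
    ?_ (hsummable.mul_left (Real.sqrt C))
  intro n
  match n with
  | 0 => simp
  | Nat.succ p =>
    set k := p + 1 with hkdef
    have hk : 1 ≤ k := by omega
    have h1 : Real.sqrt (ε k) ≤ Real.sqrt C * (Real.sqrt γ) ^ k := by
      calc Real.sqrt (ε k) ≤ Real.sqrt (C * γ ^ k) := Real.sqrt_le_sqrt (hεC k hk)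
        _ = Real.sqrt C * Real.sqrt (γ ^ k) := Real.sqrt_mul hC0 _
        _ = Real.sqrt C * (Real.sqrt γ) ^ k := by
            congr 1
            rw [← Real.sqrt_sq (pow_nonneg hr0 k)]
            congr 1
            rw [show ((Real.sqrt γ) ^ k) ^ 2 = ((Real.sqrt γ) ^ 2) ^ k by ring,
              Real.sq_sqrt hγ0.le]
    calc (k:ℝ) * Real.sqrt (ε k) ≤ (k:ℝ) * (Real.sqrt C * (Real.sqrt γ) ^ k) :=
        mul_le_mul_of_nonneg_left h1 (Nat.cast_nonneg k)
      _ = Real.sqrt C * ((k:ℝ) * (Real.sqrt γ) ^ k) := by ring
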